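/- Let f = x₀²y₀ − (x₀+x₁)²y₁ + x₁²y₂ ∈ S³V, V = k⁵. The degree-2 part of Ann(f) is spanned by all products βᵢβⱼ (0 ≤ i ≤ j ≤ 2) together with φ₁ = α₁β₀, φ₂ = α₀β₂, φ₃ = −α₀β₁ + α₁β₁, φ₄ = α₀β₀ + α₀β₁ + α₁β₂; in particular dim Ann(f)₂ = 10. -/

import Mathlib

open MvPolynomial

noncomputable section

/-- The differential operator with constant coefficients corresponding to a monomial
exponent `m` (composition of partial derivatives). -/
def monOp (k : Type*) [CommSemiring k] {n : ℕ} (m : Fin n →₀ ℕ) :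
    Module.End k (MvPolynomial (Fin n) k) :=
  (List.ofFn fun i : Fin n =>
    ((pderiv i).toLinearMap : Module.End k (MvPolynomial (Fin n) k)) ^ m i).prod

/-- Apolarity contraction: the linear map `θ ↦ θ ⌟ f`, where a dual polynomial `θ`
acts on `f` as a differential operator with constant coefficients. -/
def contractMap {k : Type*} [CommSemiring k] {n : ℕ} (f : MvPolynomial (Fin n) k) :
    MvPolynomial (Fin n) k →ₗ[k] MvPolynomial (Fin n) k :=
  Finsupp.lsum k (fun m => LinearMap.toSpanSingleton k _ ((monOp k m) f))
    ∘ₗ (AddMonoidAlgebra.coeffLinearEquiv k).toLinearMap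

/-- The irrelevant maximal ideal `(X 0, …, X (n-1))`. -/
def irrel (k : Type*) [CommSemiring k] (n : ℕ) : Ideal (MvPolynomial (Fin n) k) :=
  Ideal.span (Set.range X)

/-- Saturation of an ideal with respect to the irrelevant maximal ideal. -/
def satur {k : Type*} [CommRing k] {n : ℕ} (I : Ideal (MvPolynomial (Fin n) k)) :
    Ideal (MvPolynomial (Fin n) k) :=
  ⨆ m : ℕ, Submodule.colon I ((irrel k n ^ m : Ideal (MvPolynomial (Fin n) k)) : Submodule _ _)

/-- An ideal is saturated (with respect to the irrelevant maximal ideal). -/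
def IsSat {k : Type*} [CommRing k] {n : ℕ} (I : Ideal (MvPolynomial (Fin n) k)) : Prop :=
  Submodule.colon I ((irrel k n : Ideal _) : Submodule _ _) ≤ I

/-- An ideal is homogeneous. -/
def IsHomogIdeal {k : Type*} [CommSemiring k] {n : ℕ}
    (I : Ideal (MvPolynomial (Fin n) k)) : Prop :=
  ∀ g ∈ I, ∀ j : ℕ, homogeneousComponent j g ∈ I

/-- Hilbert function of `S/I` in degree `i`. -/
def HFq (k : Type*) [Field k] {n : ℕ} (I : Ideal (MvPolynomial (Fin n) k)) (i : ℕ) : ℕ :=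
  Module.finrank k (homogeneousSubmodule (Fin n) k i) -
    Module.finrank k (Submodule.restrictScalars k I ⊓ homogeneousSubmodule (Fin n) k i :
      Submodule k (MvPolynomial (Fin n) k))

/-- Hilbert function of the apolar algebra `Sym V⋆ / Ann(f)` in degree `i`. -/
def HFapolar {k : Type*} [Field k] {n : ℕ} (f : MvPolynomial (Fin n) k) (i : ℕ) : ℕ :=
  Module.finrank k (homogeneousSubmodule (Fin n) k i) -
    Module.finrank k (LinearMap.ker (contractMap f) ⊓ homogeneousSubmodule (Fin n) k i :
      Submodule k (MvPolynomial (Fin n) k))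

/-- Zariski closure of a subset of a `k`-vector space: common zeros of all polynomial
functions (elements of the subalgebra of functions generated by linear functionals)
vanishing on the subset. -/
def zcl (k : Type*) {M : Type*} [Field k] [AddCommGroup M] [Module k M] (A : Set M) : Set M :=
  {p | ∀ F : M → k,
    F ∈ Algebra.adjoin k (Set.range fun φ : Module.Dual k M => (φ : M → k)) →
    (∀ a ∈ A, F a = 0) → F p = 0}

end

noncomputable section
namespace Stmt2Aux
variable {k : Type*} [Field k] [CharZero k]
set_option linter.unusedSectionVars false

theorem monOp_five (f : MvPolynomial (Fin 5) k) (m : Fin 5 →₀ ℕ) :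
    monOp k m f = ((pderiv (0:Fin 5)).toLinearMap^(m 0)) (((pderiv (1:Fin 5)).toLinearMap^(m 1)) (((pderiv (2:Fin 5)).toLinearMap^(m 2)) (((pderiv (3:Fin 5)).toLinearMap^(m 3)) (((pderiv (4:Fin 5)).toLinearMap^(m 4)) f)))) := by
  simp [monOp, List.ofFn_succ]

theorem contract_monomial {n : ℕ} (f : MvPolynomial (Fin n) k) (m : Fin n →₀ ℕ) (c : k) :
    contractMap f (monomial m c) = c • monOp k m f := by
  show (Finsupp.lsum k fun m => LinearMap.toSpanSingleton k _ ((monOp k m) f)) (Finsupp.single m c) = _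
  rw [Finsupp.lsum_single]; rfl

theorem contract_XX (f : MvPolynomial (Fin 5) k) (i j : Fin 5) :
    contractMap f (X i * X j) =
      monOp k (Finsupp.single i 1 + Finsupp.single j 1) f := by
  have : (X i * X j : MvPolynomial (Fin 5) k) = monomial (Finsupp.single i 1 + Finsupp.single j 1) 1 := by
    simp [X, monomial_mul]
  rw [this, contract_monomial, one_smul]

def FF (k : Type*) [Field k] : MvPolynomial (Fin 5) k :=
  X 0 ^ 2 * X 2 - (X 0 + X 1) ^ 2 * X 3 + X 1 ^ 2 * X 4

theorem hc00 : contractMap (FF k) (X 0 * X 0) = 2 * X 2 - 2 * X 3 := by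
  rw [contract_XX, monOp_five]; simp [Finsupp.single_apply, FF, pow_succ]; ring
theorem hc01 : contractMap (FF k) (X 0 * X 1) = -(2 * X 3) := by
  rw [contract_XX, monOp_five]; simp [Finsupp.single_apply, FF, pow_succ]; ring
theorem hc02 : contractMap (FF k) (X 0 * X 2) = 2 * X 0 := by
  rw [contract_XX, monOp_five]; simp [Finsupp.single_apply, FF, pow_succ]; ring
theorem hc03 : contractMap (FF k) (X 0 * X 3) = -(2 * X 0) - 2 * X 1 := by
  rw [contract_XX, monOp_five]; simp [Finsupp.single_apply, FF, pow_succ]; ring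
theorem hc04 : contractMap (FF k) (X 0 * X 4) = 0 := by
  rw [contract_XX, monOp_five]; simp [Finsupp.single_apply, FF, pow_succ]
theorem hc11 : contractMap (FF k) (X 1 * X 1) = -(2 * X 3) + 2 * X 4 := by
  rw [contract_XX, monOp_five]; simp [Finsupp.single_apply, FF, pow_succ]; ring
theorem hc12 : contractMap (FF k) (X 1 * X 2) = 0 := by
  rw [contract_XX, monOp_five]; simp [Finsupp.single_apply, FF, pow_succ]
theorem hc13 : contractMap (FF k) (X 1 * X 3) = -(2 * X 0) - 2 * X 1 := by
  rw [contract_XX, monOp_five]; simp [Finsupp.single_apply, FF, pow_succ]; ring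
theorem hc14 : contractMap (FF k) (X 1 * X 4) = 2 * X 1 := by
  rw [contract_XX, monOp_five]; simp [Finsupp.single_apply, FF, pow_succ]; ring
theorem hc22 : contractMap (FF k) (X 2 * X 2) = 0 := by
  rw [contract_XX, monOp_five]; simp [Finsupp.single_apply, FF, pow_succ]
theorem hc23 : contractMap (FF k) (X 2 * X 3) = 0 := by
  rw [contract_XX, monOp_five]; simp [Finsupp.single_apply, FF, pow_succ]
theorem hc24 : contractMap (FF k) (X 2 * X 4) = 0 := by
  rw [contract_XX, monOp_five]; simp [Finsupp.single_apply, FF, pow_succ]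
theorem hc33 : contractMap (FF k) (X 3 * X 3) = 0 := by
  rw [contract_XX, monOp_five]; simp [Finsupp.single_apply, FF, pow_succ]
theorem hc34 : contractMap (FF k) (X 3 * X 4) = 0 := by
  rw [contract_XX, monOp_five]; simp [Finsupp.single_apply, FF, pow_succ]
theorem hc44 : contractMap (FF k) (X 4 * X 4) = 0 := by
  rw [contract_XX, monOp_five]; simp [Finsupp.single_apply, FF, pow_succ]

def vv (k : Type*) [Field k] : Fin 15 → MvPolynomial (Fin 5) k :=
  ![X 0*X 0, X 0*X 1, X 0*X 2, X 0*X 3, X 0*X 4, X 1*X 1, X 1*X 2, X 1*X 3, X 1*X 4,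
    X 2*X 2, X 2*X 3, X 2*X 4, X 3*X 3, X 3*X 4, X 4*X 4]

def gg (k : Type*) [Field k] : Fin 10 → MvPolynomial (Fin 5) k :=
  ![X 2*X 2, X 2*X 3, X 2*X 4, X 3*X 3, X 3*X 4, X 4*X 4, X 1*X 2, X 0*X 4,
    -(X 0*X 3) + X 1*X 3, X 0*X 2 + X 0*X 3 + X 1*X 4]

theorem fs_1_0 : ((0 : Fin 1)).succ = (1 : Fin 2) := rfl
theorem fs_2_0 : ((0 : Fin 2)).succ = (1 : Fin 3) := rfl
theorem fs_2_1 : ((1 : Fin 2)).succ = (2 : Fin 3) := rfl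
theorem fs_3_0 : ((0 : Fin 3)).succ = (1 : Fin 4) := rfl
theorem fs_3_1 : ((1 : Fin 3)).succ = (2 : Fin 4) := rfl
theorem fs_3_2 : ((2 : Fin 3)).succ = (3 : Fin 4) := rfl
theorem fs_4_0 : ((0 : Fin 4)).succ = (1 : Fin 5) := rfl
theorem fs_4_1 : ((1 : Fin 4)).succ = (2 : Fin 5) := rfl
theorem fs_4_2 : ((2 : Fin 4)).succ = (3 : Fin 5) := rfl
theorem fs_4_3 : ((3 : Fin 4)).succ = (4 : Fin 5) := rfl
theorem fs_5_0 : ((0 : Fin 5)).succ = (1 : Fin 6) := rfl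
theorem fs_5_1 : ((1 : Fin 5)).succ = (2 : Fin 6) := rfl
theorem fs_5_2 : ((2 : Fin 5)).succ = (3 : Fin 6) := rfl
theorem fs_5_3 : ((3 : Fin 5)).succ = (4 : Fin 6) := rfl
theorem fs_5_4 : ((4 : Fin 5)).succ = (5 : Fin 6) := rfl
theorem fs_6_0 : ((0 : Fin 6)).succ = (1 : Fin 7) := rfl
theorem fs_6_1 : ((1 : Fin 6)).succ = (2 : Fin 7) := rfl
theorem fs_6_2 : ((2 : Fin 6)).succ = (3 : Fin 7) := rfl
theorem fs_6_3 : ((3 : Fin 6)).succ = (4 : Fin 7) := rfl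
theorem fs_6_4 : ((4 : Fin 6)).succ = (5 : Fin 7) := rfl
theorem fs_6_5 : ((5 : Fin 6)).succ = (6 : Fin 7) := rfl
theorem fs_7_0 : ((0 : Fin 7)).succ = (1 : Fin 8) := rfl
theorem fs_7_1 : ((1 : Fin 7)).succ = (2 : Fin 8) := rfl
theorem fs_7_2 : ((2 : Fin 7)).succ = (3 : Fin 8) := rfl
theorem fs_7_3 : ((3 : Fin 7)).succ = (4 : Fin 8) := rfl
theorem fs_7_4 : ((4 : Fin 7)).succ = (5 : Fin 8) := rfl
theorem fs_7_5 : ((5 : Fin 7)).succ = (6 : Fin 8) := rfl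
theorem fs_7_6 : ((6 : Fin 7)).succ = (7 : Fin 8) := rfl
theorem fs_8_0 : ((0 : Fin 8)).succ = (1 : Fin 9) := rfl
theorem fs_8_1 : ((1 : Fin 8)).succ = (2 : Fin 9) := rfl
theorem fs_8_2 : ((2 : Fin 8)).succ = (3 : Fin 9) := rfl
theorem fs_8_3 : ((3 : Fin 8)).succ = (4 : Fin 9) := rfl
theorem fs_8_4 : ((4 : Fin 8)).succ = (5 : Fin 9) := rfl
theorem fs_8_5 : ((5 : Fin 8)).succ = (6 : Fin 9) := rfl
theorem fs_8_6 : ((6 : Fin 8)).succ = (7 : Fin 9) := rfl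
theorem fs_8_7 : ((7 : Fin 8)).succ = (8 : Fin 9) := rfl
theorem fs_9_0 : ((0 : Fin 9)).succ = (1 : Fin 10) := rfl
theorem fs_9_1 : ((1 : Fin 9)).succ = (2 : Fin 10) := rfl
theorem fs_9_2 : ((2 : Fin 9)).succ = (3 : Fin 10) := rfl
theorem fs_9_3 : ((3 : Fin 9)).succ = (4 : Fin 10) := rfl
theorem fs_9_4 : ((4 : Fin 9)).succ = (5 : Fin 10) := rfl
theorem fs_9_5 : ((5 : Fin 9)).succ = (6 : Fin 10) := rfl
theorem fs_9_6 : ((6 : Fin 9)).succ = (7 : Fin 10) := rfl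
theorem fs_9_7 : ((7 : Fin 9)).succ = (8 : Fin 10) := rfl
theorem fs_9_8 : ((8 : Fin 9)).succ = (9 : Fin 10) := rfl
theorem fs_10_0 : ((0 : Fin 10)).succ = (1 : Fin 11) := rfl
theorem fs_10_1 : ((1 : Fin 10)).succ = (2 : Fin 11) := rfl
theorem fs_10_2 : ((2 : Fin 10)).succ = (3 : Fin 11) := rfl
theorem fs_10_3 : ((3 : Fin 10)).succ = (4 : Fin 11) := rfl
theorem fs_10_4 : ((4 : Fin 10)).succ = (5 : Fin 11) := rfl
theorem fs_10_5 : ((5 : Fin 10)).succ = (6 : Fin 11) := rfl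
theorem fs_10_6 : ((6 : Fin 10)).succ = (7 : Fin 11) := rfl
theorem fs_10_7 : ((7 : Fin 10)).succ = (8 : Fin 11) := rfl
theorem fs_10_8 : ((8 : Fin 10)).succ = (9 : Fin 11) := rfl
theorem fs_10_9 : ((9 : Fin 10)).succ = (10 : Fin 11) := rfl
theorem fs_11_0 : ((0 : Fin 11)).succ = (1 : Fin 12) := rfl
theorem fs_11_1 : ((1 : Fin 11)).succ = (2 : Fin 12) := rfl
theorem fs_11_2 : ((2 : Fin 11)).succ = (3 : Fin 12) := rfl
theorem fs_11_3 : ((3 : Fin 11)).succ = (4 : Fin 12) := rfl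
theorem fs_11_4 : ((4 : Fin 11)).succ = (5 : Fin 12) := rfl
theorem fs_11_5 : ((5 : Fin 11)).succ = (6 : Fin 12) := rfl
theorem fs_11_6 : ((6 : Fin 11)).succ = (7 : Fin 12) := rfl
theorem fs_11_7 : ((7 : Fin 11)).succ = (8 : Fin 12) := rfl
theorem fs_11_8 : ((8 : Fin 11)).succ = (9 : Fin 12) := rfl
theorem fs_11_9 : ((9 : Fin 11)).succ = (10 : Fin 12) := rfl
theorem fs_11_10 : ((10 : Fin 11)).succ = (11 : Fin 12) := rfl
theorem fs_12_0 : ((0 : Fin 12)).succ = (1 : Fin 13) := rfl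
theorem fs_12_1 : ((1 : Fin 12)).succ = (2 : Fin 13) := rfl
theorem fs_12_2 : ((2 : Fin 12)).succ = (3 : Fin 13) := rfl
theorem fs_12_3 : ((3 : Fin 12)).succ = (4 : Fin 13) := rfl
theorem fs_12_4 : ((4 : Fin 12)).succ = (5 : Fin 13) := rfl
theorem fs_12_5 : ((5 : Fin 12)).succ = (6 : Fin 13) := rfl
theorem fs_12_6 : ((6 : Fin 12)).succ = (7 : Fin 13) := rfl
theorem fs_12_7 : ((7 : Fin 12)).succ = (8 : Fin 13) := rfl
theorem fs_12_8 : ((8 : Fin 12)).succ = (9 : Fin 13) := rfl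
theorem fs_12_9 : ((9 : Fin 12)).succ = (10 : Fin 13) := rfl
theorem fs_12_10 : ((10 : Fin 12)).succ = (11 : Fin 13) := rfl
theorem fs_12_11 : ((11 : Fin 12)).succ = (12 : Fin 13) := rfl
theorem fs_13_0 : ((0 : Fin 13)).succ = (1 : Fin 14) := rfl
theorem fs_13_1 : ((1 : Fin 13)).succ = (2 : Fin 14) := rfl
theorem fs_13_2 : ((2 : Fin 13)).succ = (3 : Fin 14) := rfl
theorem fs_13_3 : ((3 : Fin 13)).succ = (4 : Fin 14) := rfl
theorem fs_13_4 : ((4 : Fin 13)).succ = (5 : Fin 14) := rfl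
theorem fs_13_5 : ((5 : Fin 13)).succ = (6 : Fin 14) := rfl
theorem fs_13_6 : ((6 : Fin 13)).succ = (7 : Fin 14) := rfl
theorem fs_13_7 : ((7 : Fin 13)).succ = (8 : Fin 14) := rfl
theorem fs_13_8 : ((8 : Fin 13)).succ = (9 : Fin 14) := rfl
theorem fs_13_9 : ((9 : Fin 13)).succ = (10 : Fin 14) := rfl
theorem fs_13_10 : ((10 : Fin 13)).succ = (11 : Fin 14) := rfl
theorem fs_13_11 : ((11 : Fin 13)).succ = (12 : Fin 14) := rfl
theorem fs_13_12 : ((12 : Fin 13)).succ = (13 : Fin 14) := rfl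
theorem fs_14_0 : ((0 : Fin 14)).succ = (1 : Fin 15) := rfl
theorem fs_14_1 : ((1 : Fin 14)).succ = (2 : Fin 15) := rfl
theorem fs_14_2 : ((2 : Fin 14)).succ = (3 : Fin 15) := rfl
theorem fs_14_3 : ((3 : Fin 14)).succ = (4 : Fin 15) := rfl
theorem fs_14_4 : ((4 : Fin 14)).succ = (5 : Fin 15) := rfl
theorem fs_14_5 : ((5 : Fin 14)).succ = (6 : Fin 15) := rfl
theorem fs_14_6 : ((6 : Fin 14)).succ = (7 : Fin 15) := rfl
theorem fs_14_7 : ((7 : Fin 14)).succ = (8 : Fin 15) := rfl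
theorem fs_14_8 : ((8 : Fin 14)).succ = (9 : Fin 15) := rfl
theorem fs_14_9 : ((9 : Fin 14)).succ = (10 : Fin 15) := rfl
theorem fs_14_10 : ((10 : Fin 14)).succ = (11 : Fin 15) := rfl
theorem fs_14_11 : ((11 : Fin 14)).succ = (12 : Fin 15) := rfl
theorem fs_14_12 : ((12 : Fin 14)).succ = (13 : Fin 15) := rfl
theorem fs_14_13 : ((13 : Fin 14)).succ = (14 : Fin 15) := rfl

set_option maxHeartbeats 2000000 in
theorem mem_span_vv {p : MvPolynomial (Fin 5) k}
    (hp : p ∈ homogeneousSubmodule (Fin 5) k 2) :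
    p ∈ Submodule.span k (Set.range (vv k)) := by
  rw [mem_homogeneousSubmodule] at hp
  rw [← p.support_sum_monomial_coeff]
  apply Submodule.sum_mem
  intro m hm
  have hd : Finsupp.weight 1 m = 2 := hp (mem_support_iff.mp hm)
  rw [show (Finsupp.weight 1 : (Fin 5 →₀ ℕ) →+ ℕ) = Finsupp.weight (fun _ => 1) from rfl,
    ← Finsupp.degree_eq_weight_one, Finsupp.degree_apply] at hd
  have hsum : m 0 + m 1 + m 2 + m 3 + m 4 = 2 := by
    have h2 : ∑ i : Fin 5, m i = 2 := by
      rw [← Finset.sum_subset (Finset.subset_univ m.support)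
        (fun i _ hi => Finsupp.notMem_support_iff.mp hi)]
      exact hd
    rwa [Fin.sum_univ_five] at h2
  have hmon : (monomial m (coeff m p) : MvPolynomial (Fin 5) k) =
      coeff m p • (X 0 ^ m 0 * X 1 ^ m 1 * X 2 ^ m 2 * X 3 ^ m 3 * X 4 ^ m 4) := by
    rw [monomial_eq, Finsupp.prod_fintype _ _ (fun i => pow_zero _), Fin.prod_univ_five, C_mul']
  rw [hmon]
  apply Submodule.smul_mem
  generalize m 0 = a at hsum ⊢
  generalize m 1 = b at hsum ⊢
  generalize m 2 = c at hsum ⊢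
  generalize m 3 = d at hsum ⊢
  generalize m 4 = e at hsum ⊢
  have ha : a ≤ 2 := by omega
  have hb : b ≤ 2 := by omega
  have hcb : c ≤ 2 := by omega
  have hd2 : d ≤ 2 := by omega
  have he : e ≤ 2 := by omega
  interval_cases a <;> interval_cases b <;> interval_cases c <;> interval_cases d <;>
      interval_cases e <;>
    simp only [pow_zero, pow_one, pow_two, one_mul, mul_one] <;>
    first
      | omega
      | exact Submodule.subset_span ⟨0, rfl⟩
      | exact Submodule.subset_span ⟨1, rfl⟩
      | exact Submodule.subset_span ⟨2, rfl⟩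
      | exact Submodule.subset_span ⟨3, rfl⟩
      | exact Submodule.subset_span ⟨4, rfl⟩
      | exact Submodule.subset_span ⟨5, rfl⟩
      | exact Submodule.subset_span ⟨6, rfl⟩
      | exact Submodule.subset_span ⟨7, rfl⟩
      | exact Submodule.subset_span ⟨8, rfl⟩
      | exact Submodule.subset_span ⟨9, rfl⟩
      | exact Submodule.subset_span ⟨10, rfl⟩
      | exact Submodule.subset_span ⟨11, rfl⟩
      | exact Submodule.subset_span ⟨12, rfl⟩
      | exact Submodule.subset_span ⟨13, rfl⟩
      | exact Submodule.subset_span ⟨14, rfl⟩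

theorem hXX (i j : Fin 5) : ((X i * X j : MvPolynomial (Fin 5) k)).IsHomogeneous 2 :=
  (isHomogeneous_X k i).mul (isHomogeneous_X k j)

set_option maxHeartbeats 4000000 in
theorem span_eq :
    (LinearMap.ker (contractMap (FF k)) ⊓ homogeneousSubmodule (Fin 5) k 2 :
      Submodule k (MvPolynomial (Fin 5) k)) = Submodule.span k (Set.range (gg k)) := by
  apply le_antisymm
  · rintro θ hθ
    rw [Submodule.mem_inf] at hθ
    obtain ⟨hker, hhom⟩ := hθ
    have hsp := mem_span_vv hhom
    rw [Submodule.mem_span_range_iff_exists_fun] at hsp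
    obtain ⟨c, hc⟩ := hsp
    have hk0 : contractMap (FF k) θ = 0 := LinearMap.mem_ker.mp hker
    rw [← hc] at hk0
    simp only [Fin.sum_univ_succ, Fin.sum_univ_zero, vv, Matrix.cons_val_zero,
      Matrix.cons_val_succ, add_zero, fs_1_0, fs_2_0, fs_2_1, fs_3_0, fs_3_1, fs_3_2, fs_4_0, fs_4_1, fs_4_2, fs_4_3, fs_5_0, fs_5_1, fs_5_2, fs_5_3, fs_5_4, fs_6_0, fs_6_1, fs_6_2, fs_6_3, fs_6_4, fs_6_5, fs_7_0, fs_7_1, fs_7_2, fs_7_3, fs_7_4, fs_7_5, fs_7_6, fs_8_0, fs_8_1, fs_8_2, fs_8_3, fs_8_4, fs_8_5, fs_8_6, fs_8_7, fs_9_0, fs_9_1, fs_9_2, fs_9_3, fs_9_4, fs_9_5, fs_9_6, fs_9_7, fs_9_8, fs_10_0, fs_10_1, fs_10_2, fs_10_3, fs_10_4, fs_10_5, fs_10_6, fs_10_7, fs_10_8, fs_10_9, fs_11_0, fs_11_1, fs_11_2, fs_11_3, fs_11_4, fs_11_5, fs_11_6, fs_11_7, fs_11_8, fs_11_9, fs_11_10,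 fs_12_0, fs_12_1, fs_12_2, fs_12_3, fs_12_4, fs_12_5, fs_12_6, fs_12_7, fs_12_8, fs_12_9, fs_12_10, fs_12_11, fs_13_0, fs_13_1, fs_13_2, fs_13_3, fs_13_4, fs_13_5, fs_13_6, fs_13_7, fs_13_8, fs_13_9, fs_13_10, fs_13_11, fs_13_12, fs_14_0, fs_14_1, fs_14_2, fs_14_3, fs_14_4, fs_14_5, fs_14_6, fs_14_7, fs_14_8, fs_14_9, fs_14_10, fs_14_11, fs_14_12, fs_14_13] at hk0
    simp only [map_add, map_smul, hc00, hc01, hc02, hc03, hc04, hc11,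
      hc12, hc13, hc14, hc22, hc23, hc24, hc33, hc34, hc44, smul_zero, add_zero] at hk0
    have e0 := congrArg (eval ![(1:k),0,0,0,0]) hk0
    have e1 := congrArg (eval ![(0:k),1,0,0,0]) hk0
    have e2 := congrArg (eval ![(0:k),0,1,0,0]) hk0
    have e3 := congrArg (eval ![(0:k),0,0,1,0]) hk0
    have e4 := congrArg (eval ![(0:k),0,0,0,1]) hk0
    simp [smul_eval] at e0 e1 e2 e3 e4
    have h0 : c 0 = 0 := by linear_combination e2
    have h5 : c 5 = 0 := by linear_combination e4
    have h1 : c 1 = 0 := by linear_combination -e3 / 2 - h0 - h5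
    have h2 : c 2 = c 3 + c 7 := by linear_combination e0 / 2
    have h8 : c 8 = c 3 + c 7 := by linear_combination e1 / 2
    rw [Submodule.mem_span_range_iff_exists_fun]
    refine ⟨![c 9, c 10, c 11, c 12, c 13, c 14, c 6, c 4, c 7, c 3 + c 7], ?_⟩
    rw [← hc]
    simp only [Fin.sum_univ_succ, Fin.sum_univ_zero, vv, gg, Matrix.cons_val_zero,
      Matrix.cons_val_succ, add_zero, fs_1_0, fs_2_0, fs_2_1, fs_3_0, fs_3_1, fs_3_2, fs_4_0, fs_4_1, fs_4_2, fs_4_3, fs_5_0, fs_5_1, fs_5_2, fs_5_3, fs_5_4, fs_6_0, fs_6_1, fs_6_2, fs_6_3, fs_6_4, fs_6_5, fs_7_0, fs_7_1, fs_7_2, fs_7_3, fs_7_4, fs_7_5, fs_7_6, fs_8_0, fs_8_1, fs_8_2, fs_8_3, fs_8_4, fs_8_5, fs_8_6, fs_8_7, fs_9_0, fs_9_1, fs_9_2, fs_9_3, fs_9_4, fs_9_5, fs_9_6, fs_9_7, fs_9_8, fs_10_0, fs_10_1, fs_10_2, fs_10_3, fs_10_4, fs_10_5, fs_10_6, fs_10_7,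 fs_10_8, fs_10_9, fs_11_0, fs_11_1, fs_11_2, fs_11_3, fs_11_4, fs_11_5, fs_11_6, fs_11_7, fs_11_8, fs_11_9, fs_11_10, fs_12_0, fs_12_1, fs_12_2, fs_12_3, fs_12_4, fs_12_5, fs_12_6, fs_12_7, fs_12_8, fs_12_9, fs_12_10, fs_12_11, fs_13_0, fs_13_1, fs_13_2, fs_13_3, fs_13_4, fs_13_5, fs_13_6, fs_13_7, fs_13_8, fs_13_9, fs_13_10, fs_13_11, fs_13_12, fs_14_0, fs_14_1, fs_14_2, fs_14_3, fs_14_4, fs_14_5, fs_14_6, fs_14_7, fs_14_8, fs_14_9, fs_14_10, fs_14_11, fs_14_12, fs_14_13]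
    rw [h0, h1, h5, h2, h8]
    module
  · rw [Submodule.span_le]
    rintro x ⟨i, rfl⟩
    fin_cases i <;>
      refine Submodule.mem_inf.mpr ⟨LinearMap.mem_ker.mpr ?_, ?_⟩
    · exact hc22
    · exact hXX 2 2
    · exact hc23
    · exact hXX 2 3
    · exact hc24
    · exact hXX 2 4
    · exact hc33
    · exact hXX 3 3
    · exact hc34
    · exact hXX 3 4
    · exact hc44
    · exact hXX 4 4
    · exact hc12
    · exact hXX 1 2
    · exact hc04
    · exact hXX 0 4
    · show contractMap (FF k) (-(X 0 * X 3) + X 1 * X 3) = 0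
      rw [map_add, map_neg, hc03, hc13]; ring
    · exact ((hXX 0 3).neg.add (hXX 1 3))
    · show contractMap (FF k) (X 0 * X 2 + X 0 * X 3 + X 1 * X 4) = 0
      rw [map_add, map_add, hc02, hc03, hc14]; ring
    · exact (((hXX 0 2).add (hXX 0 3)).add (hXX 1 4))

set_option maxHeartbeats 4000000 in
theorem indep : LinearIndependent k (gg k) := by
  rw [Fintype.linearIndependent_iff]
  intro c hc
  simp only [Fin.sum_univ_succ, Fin.sum_univ_zero, gg, Matrix.cons_val_zero,
    Matrix.cons_val_succ, add_zero, fs_1_0, fs_2_0, fs_2_1, fs_3_0, fs_3_1, fs_3_2, fs_4_0, fs_4_1, fs_4_2, fs_4_3, fs_5_0, fs_5_1, fs_5_2, fs_5_3, fs_5_4, fs_6_0, fs_6_1, fs_6_2, fs_6_3, fs_6_4, fs_6_5, fs_7_0, fs_7_1, fs_7_2, fs_7_3, fs_7_4, fs_7_5, fs_7_6, fs_8_0, fs_8_1, fs_8_2, fs_8_3, fs_8_4, fs_8_5, fs_8_6, fs_8_7, fs_9_0, fs_9_1, fs_9_2, fs_9_3, fs_9_4, fs_9_5, fs_9_6, fs_9_7,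 fs_9_8, fs_10_0, fs_10_1, fs_10_2, fs_10_3, fs_10_4, fs_10_5, fs_10_6, fs_10_7, fs_10_8, fs_10_9, fs_11_0, fs_11_1, fs_11_2, fs_11_3, fs_11_4, fs_11_5, fs_11_6, fs_11_7, fs_11_8, fs_11_9, fs_11_10, fs_12_0, fs_12_1, fs_12_2, fs_12_3, fs_12_4, fs_12_5, fs_12_6, fs_12_7, fs_12_8, fs_12_9, fs_12_10, fs_12_11, fs_13_0, fs_13_1, fs_13_2, fs_13_3, fs_13_4, fs_13_5, fs_13_6, fs_13_7, fs_13_8, fs_13_9, fs_13_10, fs_13_11, fs_13_12, fs_14_0, fs_14_1, fs_14_2, fs_14_3, fs_14_4, fs_14_5, fs_14_6, fs_14_7, fs_14_8, fs_14_9, fs_14_10, fs_14_11, fs_14_12, fs_14_13] at hc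
  have e1 := congrArg (eval ![(0:k),0,1,0,0]) hc
  have e2 := congrArg (eval ![(0:k),0,0,1,0]) hc
  have e3 := congrArg (eval ![(0:k),0,0,0,1]) hc
  have e4 := congrArg (eval ![(0:k),0,1,1,0]) hc
  have e5 := congrArg (eval ![(0:k),0,1,0,1]) hc
  have e6 := congrArg (eval ![(0:k),0,0,1,1]) hc
  have e7 := congrArg (eval ![(0:k),1,1,0,0]) hc
  have e8 := congrArg (eval ![(1:k),0,0,0,1]) hc
  have e9 := congrArg (eval ![(0:k),1,0,1,0]) hc
  have e10 := congrArg (eval ![(1:k),0,1,0,0]) hc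
  simp [smul_eval] at e1 e2 e3 e4 e5 e6 e7 e8 e9 e10
  have h0 : c 0 = 0 := by linear_combination e1
  have h3 : c 3 = 0 := by linear_combination e2
  have h5 : c 5 = 0 := by linear_combination e3
  have h1 : c 1 = 0 := by linear_combination e4 - e1 - e2
  have h2 : c 2 = 0 := by linear_combination e5 - e1 - e3
  have h4 : c 4 = 0 := by linear_combination e6 - e2 - e3
  have h6 : c 6 = 0 := by linear_combination e7 - e1
  have h7 : c 7 = 0 := by linear_combination e8 - e3
  have h8 : c 8 = 0 := by linear_combination e9 - e2
  have h9 : c 9 = 0 := by linear_combination e10 - e1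
  intro i
  fin_cases i <;> assumption

theorem rank10 : Module.finrank k (Submodule.span k (Set.range (gg k))) = 10 := by
  rw [finrank_span_eq_card (R := k) indep]
  simp

theorem gset : Set.range (gg k) =
    ({X 2*X 2, X 2*X 3, X 2*X 4, X 3*X 3, X 3*X 4, X 4*X 4, X 1*X 2, X 0*X 4,
      -(X 0*X 3) + X 1*X 3, X 0*X 2 + X 0*X 3 + X 1*X 4} : Set (MvPolynomial (Fin 5) k)) := by
  simp only [gg, Matrix.range_cons, Set.singleton_union, Matrix.range_empty, Set.union_empty]

end Stmt2Aux
end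

/-- the degree 2 part of the apolar ideal of
`f = x₀²y₀ − (x₀+x₁)²y₁ + x₁²y₂` is spanned by the products `βᵢβⱼ` together with
`φ₁ = α₁β₀`, `φ₂ = α₀β₂`, `φ₃ = −α₀β₁ + α₁β₁`, `φ₄ = α₀β₀ + α₀β₁ + α₁β₂`;
in particular it has dimension `10`. Here, in the dual ring `k[α₀,α₁,β₀,β₁,β₂]`,
`α₀ = X 0`, `α₁ = X 1`, `β₀ = X 2`, `β₁ = X 3`, `β₂ = X 4`. -/
theorem stmt2 (k : Type*) [Field k] [IsAlgClosed k] [CharZero k] :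
    let x0 : MvPolynomial (Fin 5) k := X 0
    let x1 : MvPolynomial (Fin 5) k := X 1
    let y0 : MvPolynomial (Fin 5) k := X 2
    let y1 : MvPolynomial (Fin 5) k := X 3
    let y2 : MvPolynomial (Fin 5) k := X 4
    let f := x0 ^ 2 * y0 - (x0 + x1) ^ 2 * y1 + x1 ^ 2 * y2
    let a0 : MvPolynomial (Fin 5) k := X 0
    let a1 : MvPolynomial (Fin 5) k := X 1
    let b0 : MvPolynomial (Fin 5) k := X 2
    let b1 : MvPolynomial (Fin 5) k := X 3
    let b2 : MvPolynomial (Fin 5) k := X 4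
    let Ann2 : Submodule k (MvPolynomial (Fin 5) k) :=
      LinearMap.ker (contractMap f) ⊓ homogeneousSubmodule (Fin 5) k 2
    Ann2 = Submodule.span k
        {b0 * b0, b0 * b1, b0 * b2, b1 * b1, b1 * b2, b2 * b2,
         a1 * b0, a0 * b2, -(a0 * b1) + a1 * b1, a0 * b0 + a0 * b1 + a1 * b2} ∧
      Module.finrank k Ann2 = 10 := by
  intro x0 x1 y0 y1 y2 f a0 a1 b0 b1 b2 Ann2
  have key : Ann2 = Submodule.span k (Set.range (Stmt2Aux.gg k)) := Stmt2Aux.span_eq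
  constructor
  · rw [key, Stmt2Aux.gset]
  · rw [key]
    exact Stmt2Aux.rank10
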